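/- Let m > 0, ξ > 0, γ̄ > 0 be real numbers, set β = Γ(m + 1/ξ)/Γ(m), and let n ≥ 1 be a natural number. Then ∫_0^∞ (log(1 + γ))^n · (ξ/Γ(m)) · (β/γ̄)^{ξm} · γ^{ξm − 1} · exp(−((β/γ̄)·γ)^ξ) dγ ≤ (Γ(m + n/ξ)/Γ(m)) · (γ̄/β)^n. -/

import Mathlib

open Real Set MeasureTheory

lemma myIntegrableOn_rpow_mul_exp_neg_rpow {p s : ℝ} (hs : -1 < s) (hp : 0 < p) :
    IntegrableOn (fun x : ℝ => x ^ s * exp (- x ^ p)) (Ioi 0) := by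
  rw [← integrableOn_Ioi_comp_rpow_iff' (fun x : ℝ => x ^ s * exp (-x ^ p))
    (one_div_ne_zero hp.ne')]
  have h : IntegrableOn (fun x : ℝ => exp (-x) * x ^ ((s + 1) / p - 1)) (Ioi 0) :=
    Real.GammaIntegral_convergent (div_pos (by linarith) hp)
  refine h.congr_fun (fun x hx => ?_) measurableSet_Ioi
  have hx : (0:ℝ) < x := hx
  have e1 : (x ^ (1/p)) ^ p = x := by
    rw [← rpow_mul hx.le, one_div_mul_cancel hp.ne', rpow_one]
  have e2 : (x ^ (1/p)) ^ s = x ^ (1/p*s) := (rpow_mul hx.le _ _).symm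
  beta_reduce
  rw [smul_eq_mul, e1, e2,
    show (s + 1) / p - 1 = 1 / p - 1 + 1 / p * s by field_simp; ring, rpow_add hx]
  ring

lemma myIntegrableOn_rpow_mul_exp_neg_mul_rpow {p s b : ℝ} (hs : -1 < s) (hp : 0 < p)
    (hb : 0 < b) :
    IntegrableOn (fun x : ℝ => x ^ s * exp (- b * x ^ p)) (Ioi 0) := by
  have hib : 0 < b ^ (-p⁻¹) := rpow_pos_of_pos hb _
  suffices IntegrableOn (fun x ↦ (b ^ (-p⁻¹)) ^ s * (x ^ s * exp (-x ^ p))) (Ioi 0) by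
    rw [show (0:ℝ) = b ^ (-p⁻¹) * 0 by rw [mul_zero], ← integrableOn_Ioi_comp_mul_left_iff _ _ hib]
    refine this.congr_fun (fun _ hx => ?_) measurableSet_Ioi
    beta_reduce
    rw [← mul_assoc, mul_rpow, mul_rpow, ← rpow_mul (z := p), neg_mul, neg_mul, inv_mul_cancel₀,
      rpow_neg_one, mul_inv_cancel_left₀]
    all_goals linarith [mem_Ioi.mp hx]
  exact ((myIntegrableOn_rpow_mul_exp_neg_rpow hs hp).const_mul _ : _)

/-- Paper's Theorem 9 specialized to generalized Nakagami-m (generalized gamma)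
fading: for `n ≥ 1`, with `β = Γ(m+1/ξ)/Γ(m)`,
`∫_0^∞ (log(1+γ))^n p(γ) dγ ≤ (Γ(m+n/ξ)/Γ(m)) (γ̄/β)^n`. -/
theorem generalized_gamma_hocc_low_snr_bound (m ξ γbar : ℝ) (hm : 0 < m)
    (hξ : 0 < ξ) (hγbar : 0 < γbar) (β : ℝ)
    (hβ : β = Real.Gamma (m + 1 / ξ) / Real.Gamma m) (n : ℕ) (hn : 1 ≤ n) :
    ∫ γ in Set.Ioi (0:ℝ),
        (Real.log (1 + γ)) ^ n
          * ((ξ / Real.Gamma m) * (β / γbar) ^ (ξ * m) * γ ^ (ξ * m - 1)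
            * Real.exp (-(((β / γbar) * γ) ^ ξ)))
      ≤ (Real.Gamma (m + (n : ℝ) / ξ) / Real.Gamma m) * (γbar / β) ^ (n : ℕ) := by
  have hΓm : 0 < Real.Gamma m := Real.Gamma_pos_of_pos hm
  have hβpos : 0 < β := by
    rw [hβ]; exact div_pos (Real.Gamma_pos_of_pos (by positivity)) hΓm
  set c : ℝ := β / γbar with hc
  have hcpos : 0 < c := div_pos hβpos hγbar
  set K : ℝ := ξ / Real.Gamma m * c ^ (ξ * m) with hK
  set q : ℝ := (n : ℝ) + ξ * m - 1 with hq
  have hq1 : (-1 : ℝ) < q := by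
    have : (1:ℝ) ≤ (n:ℝ) := by exact_mod_cast hn
    have : 0 < ξ * m := by positivity
    simp only [hq]; linarith
  have hb : 0 < c ^ ξ := rpow_pos_of_pos hcpos _
  -- the dominating function
  have key : ∀ γ : ℝ, γ ∈ Ioi (0:ℝ) →
      (γ:ℝ) ^ n * (ξ / Real.Gamma m * c ^ (ξ * m) * γ ^ (ξ * m - 1) * exp (-((c * γ) ^ ξ)))
        = K * (γ ^ q * exp (-(c ^ ξ) * γ ^ ξ)) := by
    intro γ hγ
    have hγ : (0:ℝ) < γ := hγ
    rw [mul_rpow hcpos.le hγ.le, ← rpow_natCast γ n, hK, hq]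
    rw [show (n:ℝ) + ξ * m - 1 = (n:ℝ) + (ξ * m - 1) by ring, rpow_add hγ, neg_mul]
    ring
  have hint : IntegrableOn
      (fun γ => (γ:ℝ) ^ n * (ξ / Real.Gamma m * c ^ (ξ * m) * γ ^ (ξ * m - 1)
        * exp (-((c * γ) ^ ξ)))) (Ioi 0) := by
    refine MeasureTheory.IntegrableOn.congr_fun
      ((myIntegrableOn_rpow_mul_exp_neg_mul_rpow hq1 hξ hb).const_mul K)
      (fun γ hγ => (key γ hγ).symm) measurableSet_Ioi
  have hmono : (∫ γ in Set.Ioi (0:ℝ),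
      (Real.log (1 + γ)) ^ n
        * ((ξ / Real.Gamma m) * c ^ (ξ * m) * γ ^ (ξ * m - 1) * Real.exp (-((c * γ) ^ ξ))))
      ≤ ∫ γ in Set.Ioi (0:ℝ),
        (γ:ℝ) ^ n * ((ξ / Real.Gamma m) * c ^ (ξ * m) * γ ^ (ξ * m - 1)
          * Real.exp (-((c * γ) ^ ξ))) := by
    refine integral_mono_of_nonneg ?_ hint ?_
    · refine (ae_restrict_iff' measurableSet_Ioi).mpr (ae_of_all _ (fun γ hγ => ?_))
      have hγ : (0:ℝ) < γ := hγ
      have h1 : (0:ℝ) ≤ Real.log (1 + γ) := Real.log_nonneg (by linarith)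
      positivity
    · refine (ae_restrict_iff' measurableSet_Ioi).mpr (ae_of_all _ (fun γ hγ => ?_))
      have hγ : (0:ℝ) < γ := hγ
      have h1 : (0:ℝ) ≤ Real.log (1 + γ) := Real.log_nonneg (by linarith)
      have h2 : Real.log (1 + γ) ≤ γ := by
        have := Real.log_le_sub_one_of_pos (show (0:ℝ) < 1 + γ by linarith)
        linarith
      have h3 : (Real.log (1 + γ)) ^ n ≤ γ ^ n := pow_le_pow_left₀ h1 h2 n
      have h4 : (0:ℝ) ≤ (ξ / Real.Gamma m) * c ^ (ξ * m) * γ ^ (ξ * m - 1)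
          * Real.exp (-((c * γ) ^ ξ)) := by positivity
      exact mul_le_mul_of_nonneg_right h3 h4
  refine hmono.trans (le_of_eq ?_)
  rw [setIntegral_congr_fun measurableSet_Ioi key, integral_const_mul,
    integral_rpow_mul_exp_neg_mul_rpow hξ hq1 hb]
  have hqξ : (q + 1) / ξ = m + (n:ℝ) / ξ := by
    rw [hq]; field_simp; ring
  rw [hqξ]
  have hpow : (c ^ ξ) ^ (-(q + 1) / ξ) = c ^ (-(q + 1)) := by
    rw [← rpow_mul hcpos.le]
    congr 1
    field_simp
  rw [hpow]
  have hcinv : c ^ (-(q + 1)) = (γbar / β) ^ (n:ℕ) * c ^ (-(ξ * m)) := by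
    rw [hq, show -((n:ℝ) + ξ * m - 1 + 1) = (-(n:ℝ)) + (-(ξ * m)) by ring, rpow_add hcpos,
      rpow_neg hcpos.le ((n:ℝ)), rpow_natCast, hc, ← inv_pow, inv_div]
  rw [hcinv, hK]
  rw [show ξ / Real.Gamma m * c ^ (ξ * m) * ((γbar / β) ^ n * c ^ (-(ξ * m)) * (1 / ξ)
        * Real.Gamma (m + (n:ℝ) / ξ))
      = (c ^ (ξ * m) * c ^ (-(ξ * m))) * (ξ * (1/ξ)) * (Real.Gamma (m + (n:ℝ) / ξ)
        / Real.Gamma m * (γbar / β) ^ n) by ring]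
  rw [← rpow_add hcpos, add_neg_cancel, rpow_zero, mul_one_div, div_self hξ.ne', one_mul, one_mul]
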